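/- Let X, Y ⊆ F_q be finite nonempty sets and let R(X,Y) = {(b₁ - b₂)/(a₁ - a₂) : a₁, a₂ ∈ X, a₁ ≠ a₂, b₁, b₂ ∈ Y} ∪ {0}. Then ∑_{r ∈ R(X,Y)} E⁺(rX, Y) ≤ |R(X,Y)| |X| |Y| + |X|² |Y|², where E⁺(U, V) is the number of quadruples (u₁, u₂, v₁, v₂) ∈ U² × V² with u₁ + v₁ = u₂ + v₂. -/

import Mathlib

open Pointwise Finset

/-- The additive energy `E⁺(U,V)`: the number of quadruples
`(u₁, u₂, v₁, v₂) ∈ U² × V²` with `u₁ + v₁ = u₂ + v₂`. -/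
def energyPlus {F : Type*} [DecidableEq F] [Field F] (U V : Finset F) : ℕ :=
  (((U ×ˢ U) ×ˢ V ×ˢ V).filter (fun p => p.1.1 + p.2.1 = p.1.2 + p.2.2)).card

theorem sum_energy_over_ratio_set {F : Type*} [Field F] [Fintype F] [DecidableEq F]
    (X Y R : Finset F) (hX : X.Nonempty) (hY : Y.Nonempty)
    (hR : ∀ x : F, x ∈ R ↔ (x = 0 ∨ ∃ a₁ ∈ X, ∃ a₂ ∈ X, ∃ b₁ ∈ Y, ∃ b₂ ∈ Y,
      a₁ ≠ a₂ ∧ x = (b₁ - b₂) / (a₁ - a₂))) :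
    ∑ r ∈ R, energyPlus (X.image (fun x => r * x)) Y
      ≤ R.card * X.card * Y.card + X.card ^ 2 * Y.card ^ 2 := by
  classical
  set Q : Finset ((F × F) × F × F) := (X ×ˢ X) ×ˢ Y ×ˢ Y with hQ
  set T : F → Finset ((F × F) × F × F) := fun r =>
    Q.filter (fun q => q.1.1 ≠ q.1.2 ∧ r * (q.1.1 - q.1.2) = q.2.2 - q.2.1) with hT
  have key : ∀ r : F, energyPlus (X.image (fun x => r * x)) Y ≤
      X.card * Y.card + (T r).card := by
    intro r
    set U : Finset F := X.image (fun x => r * x) with hU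
    set S : Finset ((F × F) × F × F) :=
      ((U ×ˢ U) ×ˢ Y ×ˢ Y).filter (fun p => p.1.1 + p.2.1 = p.1.2 + p.2.2) with hS
    have hsplit : (S.filter (fun p => p.1.1 = p.1.2)).card
        + (S.filter (fun p => ¬ p.1.1 = p.1.2)).card = S.card :=
      Finset.card_filter_add_card_filter_not _
    have h1 : (S.filter (fun p => p.1.1 = p.1.2)).card ≤ X.card * Y.card := by
      have := Finset.card_le_card_of_injOn (f := fun p : (F × F) × F × F => (p.1.1, p.2.1))
        (s := S.filter (fun p => p.1.1 = p.1.2)) (t := X.image (fun x => r * x) ×ˢ Y)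
        (by
          intro p hp
          rw [Finset.mem_coe, Finset.mem_filter, hS, Finset.mem_filter, Finset.mem_product,
            Finset.mem_product, Finset.mem_product] at hp
          exact Finset.mem_coe.2 (Finset.mem_product.2 ⟨hp.1.1.1.1, hp.1.1.2.1⟩))
        (by
          intro p hp q hq hpq
          rw [Finset.mem_coe, Finset.mem_filter, hS, Finset.mem_filter] at hp
          rw [Finset.mem_coe, Finset.mem_filter, hS, Finset.mem_filter] at hq
          obtain ⟨⟨-, hpe⟩, hpd⟩ := hp
          obtain ⟨⟨-, hqe⟩, hqd⟩ := hq
          have hpq' : (p.1.1, p.2.1) = (q.1.1, q.2.1) := hpq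
          obtain ⟨h11, h21⟩ := Prod.mk.inj hpq'
          have hp2 : p.2.1 = p.2.2 := by
            have := hpe; rw [← hpd] at this; exact add_left_cancel this
          have hq2 : q.2.1 = q.2.2 := by
            have := hqe; rw [← hqd] at this; exact add_left_cancel this
          have h12 : p.1.2 = q.1.2 := by rw [← hpd, ← hqd, h11]
          have h22 : p.2.2 = q.2.2 := by rw [← hp2, ← hq2, h21]
          exact Prod.ext (Prod.ext h11 h12) (Prod.ext h21 h22))
      calc (S.filter (fun p => p.1.1 = p.1.2)).card
          ≤ (X.image (fun x => r * x) ×ˢ Y).card := this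
        _ = (X.image (fun x => r * x)).card * Y.card := Finset.card_product _ _
        _ ≤ X.card * Y.card := Nat.mul_le_mul_right _ (Finset.card_image_le)
    have h2 : (S.filter (fun p => ¬ p.1.1 = p.1.2)).card ≤ (T r).card := by
      have hsub : S.filter (fun p => ¬ p.1.1 = p.1.2) ⊆
          (T r).image (fun q : (F × F) × F × F => ((r * q.1.1, r * q.1.2), q.2)) := by
        intro p hp
        rw [Finset.mem_filter, hS, Finset.mem_filter, Finset.mem_product,
          Finset.mem_product, Finset.mem_product] at hp
        obtain ⟨⟨⟨⟨hu1, hu2⟩, hy1, hy2⟩, heq⟩, hne⟩ := hp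
        simp only [hU, Finset.mem_image] at hu1 hu2
        obtain ⟨x₁, hx₁, hrx₁⟩ := hu1
        obtain ⟨x₂, hx₂, hrx₂⟩ := hu2
        refine Finset.mem_image.2 ⟨((x₁, x₂), p.2), ?_, ?_⟩
        · simp only [hT, Finset.mem_filter, hQ, Finset.mem_product]
          refine ⟨⟨⟨hx₁, hx₂⟩, hy1, hy2⟩, ?_, ?_⟩
          · rintro rfl; exact hne (by rw [← hrx₁, ← hrx₂])
          · have : r * x₁ + p.2.1 = r * x₂ + p.2.2 := by rw [hrx₁, hrx₂]; exact heq
            linear_combination this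
        · simp only [hrx₁, hrx₂]
      calc (S.filter (fun p => ¬ p.1.1 = p.1.2)).card
          ≤ ((T r).image (fun q : (F × F) × F × F => ((r * q.1.1, r * q.1.2), q.2))).card :=
            Finset.card_le_card hsub
        _ ≤ (T r).card := Finset.card_image_le
    calc energyPlus U Y = S.card := rfl
      _ = _ + _ := hsplit.symm
      _ ≤ X.card * Y.card + (T r).card := Nat.add_le_add h1 h2
  have hdisj : ∀ r ∈ R, ∀ s ∈ R, r ≠ s → Disjoint (T r) (T s) := by
    intro r _ s _ hrs
    rw [Finset.disjoint_left]
    intro q hq hq'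
    simp only [hT, Finset.mem_filter] at hq hq'
    obtain ⟨_, hne, he1⟩ := hq
    obtain ⟨_, _, he2⟩ := hq'
    have hd : q.1.1 - q.1.2 ≠ 0 := sub_ne_zero.2 hne
    exact hrs (mul_right_cancel₀ hd (he1.trans he2.symm))
  have hsumT : ∑ r ∈ R, (T r).card ≤ Q.card := by
    rw [← Finset.card_biUnion hdisj]
    exact Finset.card_le_card (Finset.biUnion_subset.2 fun r _ => Finset.filter_subset _ _)
  have hQcard : Q.card = X.card ^ 2 * Y.card ^ 2 := by
    simp [hQ, Finset.card_product]; ring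
  calc ∑ r ∈ R, energyPlus (X.image (fun x => r * x)) Y
      ≤ ∑ r ∈ R, (X.card * Y.card + (T r).card) := Finset.sum_le_sum fun r _ => key r
    _ = R.card * (X.card * Y.card) + ∑ r ∈ R, (T r).card := by
        rw [Finset.sum_add_distrib, Finset.sum_const, smul_eq_mul]
    _ ≤ R.card * (X.card * Y.card) + X.card ^ 2 * Y.card ^ 2 := by
        rw [← hQcard]; exact Nat.add_le_add_left hsumT _
    _ = R.card * X.card * Y.card + X.card ^ 2 * Y.card ^ 2 := by ring
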